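/- Let M be a d×d matrix measure on 𝔐 and F : Ω → ℂ measurable. The multiplication operator T_F on L²(M), with domain D(T_F) = { [f] : f, Ff ∈ 𝓛²(M) } and T_F[f] = [Ff], is densely defined and closed, and its adjoint is T_F* = T_{F̄} with D(T_F*) = D(T_F). In particular T_F is self-adjoint when F is real-valued. -/

import Mathlib

open MeasureTheory Matrix Filter
open scoped ComplexOrder

section Helpers
variable {d : ℕ}

noncomputable def qf (A : Matrix (Fin d) (Fin d) ℂ) (x : Fin d → ℂ) : ℝ :=
  (star x ⬝ᵥ (A *ᵥ x)).re

lemma qf_nonneg {A : Matrix (Fin d) (Fin d) ℂ} (hA : A.PosSemidef) (x : Fin d → ℂ) :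
    0 ≤ qf A x := (Complex.nonneg_iff.mp (hA.dotProduct_mulVec_nonneg x)).1

lemma qf_zero (A : Matrix (Fin d) (Fin d) ℂ) : qf A 0 = 0 := by simp [qf]

lemma sesq_re {A : Matrix (Fin d) (Fin d) ℂ} (hA : A.PosSemidef) (x : Fin d → ℂ) :
    star x ⬝ᵥ (A *ᵥ x) = ((qf A x : ℝ) : ℂ) := by
  have h := (Complex.nonneg_iff.mp (hA.dotProduct_mulVec_nonneg x)).2
  exact Complex.ext rfl h.symm

lemma parallelogram (A : Matrix (Fin d) (Fin d) ℂ) (x y : Fin d → ℂ) :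
    qf A (x + y) + qf A (x - y) = 2 * qf A x + 2 * qf A y := by
  have h : star (x + y) ⬝ᵥ (A *ᵥ (x + y)) + star (x - y) ⬝ᵥ (A *ᵥ (x - y)) =
      2 * (star x ⬝ᵥ (A *ᵥ x)) + 2 * (star y ⬝ᵥ (A *ᵥ y)) := by
    simp [star_add, star_sub, Matrix.mulVec_add, Matrix.mulVec_sub, add_dotProduct,
      sub_dotProduct, dotProduct_add, dotProduct_sub]
    ring
  have := congrArg Complex.re h
  simpa [qf] using this

lemma qf_add_le {A : Matrix (Fin d) (Fin d) ℂ} (hA : A.PosSemidef) (x y : Fin d → ℂ) :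
    qf A (x + y) ≤ 2 * qf A x + 2 * qf A y := by
  have := parallelogram A x y
  nlinarith [qf_nonneg hA (x - y)]

lemma qf_smul (A : Matrix (Fin d) (Fin d) ℂ) (c : ℂ) (x : Fin d → ℂ) :
    qf A (c • x) = ‖c‖ ^ 2 * qf A x := by
  have h : star (c • x) ⬝ᵥ (A *ᵥ (c • x)) = ((‖c‖ ^ 2 : ℝ) : ℂ) * (star x ⬝ᵥ (A *ᵥ x)) := by
    simp only [star_smul, Matrix.mulVec_smul, smul_dotProduct, dotProduct_smul,
      smul_eq_mul, ← mul_assoc]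
    congr 1
    rw [Complex.star_def, RCLike.mul_conj]
    push_cast
    norm_num
  simp only [qf, h]
  rw [Complex.re_ofReal_mul]

lemma qf_neg (A : Matrix (Fin d) (Fin d) ℂ) (x : Fin d → ℂ) : qf A (-x) = qf A x := by
  have := qf_smul A (-1) x
  simpa using this

lemma qf_sub_le {A : Matrix (Fin d) (Fin d) ℂ} (hA : A.PosSemidef) (x y : Fin d → ℂ) :
    qf A (x - y) ≤ 2 * qf A x + 2 * qf A y := by
  rw [sub_eq_add_neg]
  simpa [qf_neg] using qf_add_le hA x (-y)

lemma qf_tri {A : Matrix (Fin d) (Fin d) ℂ} (hA : A.PosSemidef) (x y z : Fin d → ℂ) :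
    qf A (x - z) ≤ 2 * qf A (x - y) + 2 * qf A (y - z) := by
  have hxz : x - z = (x - y) + (y - z) := by abel
  rw [hxz]
  exact qf_add_le hA _ _

open scoped MatrixOrder in
lemma cs {A : Matrix (Fin d) (Fin d) ℂ} (hA : A.PosSemidef) (x y : Fin d → ℂ) :
    ‖star x ⬝ᵥ (A *ᵥ y)‖ ≤ Real.sqrt (qf A x) * Real.sqrt (qf A y) := by
  set S := CFC.sqrt A with hS
  have hherm : S.IsHermitian := (Matrix.nonneg_iff_posSemidef.mp (CFC.sqrt_nonneg A)).1
  have hSS : S * S = A := CFC.sqrt_mul_sqrt_self A (Matrix.nonneg_iff_posSemidef.mpr hA)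
  have key : ∀ u v : Fin d → ℂ, star u ⬝ᵥ (A *ᵥ v) = star (S *ᵥ u) ⬝ᵥ (S *ᵥ v) := by
    intro u v
    rw [← hSS, ← Matrix.mulVec_mulVec, Matrix.dotProduct_mulVec (star u) S,
      show star u ᵥ* S = star (S *ᵥ u) from ?_]
    rw [Matrix.star_mulVec, hherm.eq]
  have hin : ∀ a b : Fin d → ℂ, star a ⬝ᵥ b = inner ℂ (WithLp.toLp 2 a) (WithLp.toLp 2 b) :=
    fun a b => by rw [EuclideanSpace.inner_toLp_toLp, dotProduct_comm]
  have hq : ∀ u : Fin d → ℂ, qf A u = ‖WithLp.toLp 2 (S *ᵥ u)‖ ^ 2 := by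
    intro u
    have h1 : qf A u = (star (S *ᵥ u) ⬝ᵥ (S *ᵥ u)).re := by rw [qf, key]
    rw [h1, hin]
    rw [← @inner_self_eq_norm_sq ℂ]
    rfl
  rw [key, hin]
  calc ‖_‖ ≤ ‖WithLp.toLp 2 (S *ᵥ x)‖ *
      ‖WithLp.toLp 2 (S *ᵥ y)‖ := norm_inner_le_norm _ _
    _ = _ := by rw [hq x, hq y, Real.sqrt_sq (norm_nonneg _), Real.sqrt_sq (norm_nonneg _)]

lemma cs' {A : Matrix (Fin d) (Fin d) ℂ} (hA : A.PosSemidef) (x y : Fin d → ℂ) :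
    ‖star x ⬝ᵥ (A *ᵥ y)‖ ≤ qf A x + qf A y := by
  have h := cs hA x y
  have h2 : Real.sqrt (qf A x) * Real.sqrt (qf A y) ≤ qf A x + qf A y := by
    nlinarith [Real.sq_sqrt (qf_nonneg hA x), Real.sq_sqrt (qf_nonneg hA y),
      Real.sqrt_nonneg (qf A x), Real.sqrt_nonneg (qf A y),
      sq_nonneg (Real.sqrt (qf A x) - Real.sqrt (qf A y))]
  linarith

lemma meas_sesq {Ω : Type*} [MeasurableSpace Ω] {D : Ω → Matrix (Fin d) (Fin d) ℂ}
    (hD : ∀ i j, Measurable fun t => D t i j) {u v : Ω → Fin d → ℂ}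
    (hu : Measurable u) (hv : Measurable v) :
    Measurable fun t => star (u t) ⬝ᵥ (D t *ᵥ v t) := by
  have heq : (fun t => star (u t) ⬝ᵥ (D t *ᵥ v t)) =
      fun t => ∑ i, star (u t i) * ∑ j, D t i j * v t j := by
    funext t
    simp [dotProduct, Matrix.mulVec]
  rw [heq]
  exact Finset.measurable_sum _ fun i _ =>
    ((continuous_star.measurable.comp ((measurable_pi_apply i).comp hu)).mul
      (Finset.measurable_sum _ fun j _ => (hD i j).mul ((measurable_pi_apply j).comp hv)))

lemma meas_smulfun {Ω : Type*} [MeasurableSpace Ω] {F : Ω → ℂ} (hF : Measurable F)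
    {g : Ω → Fin d → ℂ} (hg : Measurable g) : Measurable fun t => F t • g t :=
  measurable_pi_iff.mpr fun i => hF.mul ((measurable_pi_apply i).comp hg)

end Helpers

/-- The squared `L²(M)`-seminorm of a `ℂ^d`-valued function, for a matrix measure with
trace measure `μ` and trace density `D`. -/
noncomputable def quadInt {Ω : Type*} [MeasurableSpace Ω] {d : ℕ}
    (μ : MeasureTheory.Measure Ω) (D : Ω → Matrix (Fin d) (Fin d) ℂ)
    (f : Ω → Fin d → ℂ) : ℝ :=
  ∫ t, (star (f t) ⬝ᵥ ((D t) *ᵥ f t)).re ∂μ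

/-- Membership in `𝓛²(M)`: measurable with finite quadratic integral. -/
def MemL2M {Ω : Type*} [MeasurableSpace Ω] {d : ℕ}
    (μ : MeasureTheory.Measure Ω) (D : Ω → Matrix (Fin d) (Fin d) ℂ)
    (f : Ω → Fin d → ℂ) : Prop :=
  Measurable f ∧ MeasureTheory.Integrable (fun t => (star (f t) ⬝ᵥ ((D t) *ᵥ f t)).re) μ

/-- The `L²(M)` inner product `⟨[f],[g]⟩_M = ∫ ⟨D t f t, g t⟩ dμ t`. -/
noncomputable def pairL2M {Ω : Type*} [MeasurableSpace Ω] {d : ℕ}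
    (μ : MeasureTheory.Measure Ω) (D : Ω → Matrix (Fin d) (Fin d) ℂ)
    (f g : Ω → Fin d → ℂ) : ℂ :=
  ∫ t, star (g t) ⬝ᵥ ((D t) *ᵥ f t) ∂μ

/-- For a matrix measure `M` (trace measure `μ`, density `D`) and measurable
`F : Ω → ℂ`, the multiplication operator `T_F` on `L²(M)` — with domain the classes `[f]`
with `f, F·f ∈ 𝓛²(M)` and `T_F [f] = [F·f]` — is densely defined, closed, and its adjoint
is `T_{conj F}` with the same domain (so `T_F` is self-adjoint for real `F`). Everything is
expressed at the level of representatives modulo the zero layer (seminorm `quadInt`). -/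
theorem multiplication_operator_densely_defined_closed_adjoint
    {Ω : Type*} [MeasurableSpace Ω] {d : ℕ}
    (M : Set Ω → Matrix (Fin d) (Fin d) ℂ)
    (μ : Measure Ω) [IsFiniteMeasure μ]
    (D : Ω → Matrix (Fin d) (Fin d) ℂ)
    (hpos : ∀ ω : Set Ω, MeasurableSet ω → (M ω).PosSemidef)
    (hμ : ∀ ω : Set Ω, MeasurableSet ω → (M ω).trace = ((μ ω).toReal : ℂ))
    (hDmeas : ∀ i j, Measurable fun t => D t i j)
    (hDpos : ∀ t, (D t).PosSemidef)
    (hden : ∀ ω : Set Ω, MeasurableSet ω → ∀ i j, M ω i j = ∫ t in ω, D t i j ∂μ)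
    (F : Ω → ℂ) (hF : Measurable F) :
    -- T_F is densely defined: its domain is dense in L²(M)
    (∀ f : Ω → Fin d → ℂ, MemL2M μ D f → ∀ ε : ℝ, 0 < ε →
      ∃ g : Ω → Fin d → ℂ, MemL2M μ D g ∧ MemL2M μ D (fun t => F t • g t) ∧
        quadInt μ D (fun t => f t - g t) < ε) ∧
    -- T_F is closed: if [gₙ] → [f] and T_F [gₙ] → [h], then [f] ∈ D(T_F), T_F [f] = [h]
    (∀ (f h : Ω → Fin d → ℂ) (G : ℕ → Ω → Fin d → ℂ),
      MemL2M μ D f → MemL2M μ D h →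
      (∀ n, MemL2M μ D (G n) ∧ MemL2M μ D (fun t => F t • G n t)) →
      Tendsto (fun n => quadInt μ D (fun t => G n t - f t)) atTop (nhds 0) →
      Tendsto (fun n => quadInt μ D (fun t => F t • G n t - h t)) atTop (nhds 0) →
      MemL2M μ D (fun t => F t • f t) ∧
        quadInt μ D (fun t => F t • f t - h t) = 0) ∧
    -- T_{conj F} ⊆ (T_F)* : the pairing identity ⟨T_F f, g⟩ = ⟨f, T_{conj F} g⟩
    (∀ f g : Ω → Fin d → ℂ,
      MemL2M μ D f → MemL2M μ D (fun t => F t • f t) →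
      MemL2M μ D g → MemL2M μ D (fun t => (starRingEnd ℂ) (F t) • g t) →
      pairL2M μ D (fun t => F t • f t) g
        = pairL2M μ D f (fun t => (starRingEnd ℂ) (F t) • g t)) ∧
    -- (T_F)* ⊆ T_{conj F} : if ⟨T_F f, g⟩ = ⟨f, h⟩ for all f ∈ D(T_F), then
    -- conj F · g ∈ 𝓛²(M) and [conj F · g] = [h] (in particular D((T_F)*) = D(T_{conj F}))
    (∀ g h : Ω → Fin d → ℂ, MemL2M μ D g → MemL2M μ D h →
      (∀ f : Ω → Fin d → ℂ, MemL2M μ D f → MemL2M μ D (fun t => F t • f t) →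
        pairL2M μ D (fun t => F t • f t) g = pairL2M μ D f h) →
      MemL2M μ D (fun t => (starRingEnd ℂ) (F t) • g t) ∧
        quadInt μ D (fun t => (starRingEnd ℂ) (F t) • g t - h t) = 0) := by
  classical
  have hqm : ∀ {u : Ω → Fin d → ℂ}, Measurable u →
      Measurable fun t => qf (D t) (u t) := fun hu =>
    Complex.measurable_re.comp (meas_sesq hDmeas hu hu)
  have hSm : ∀ m : ℕ, MeasurableSet {t : Ω | ‖F t‖ ≤ (m : ℝ)} := fun m =>
    measurableSet_le hF.norm measurable_const
  have key_ae : ∀ p : Ω → ℝ,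
      (∀ m : ℕ, ∀ᵐ t ∂μ, ‖F t‖ ≤ (m : ℝ) → p t = 0) → ∀ᵐ t ∂μ, p t = 0 := by
    intro p hp
    filter_upwards [ae_all_iff.mpr hp] with t ht
    obtain ⟨m, hm⟩ := exists_nat_ge ‖F t‖
    exact ht m hm
  refine ⟨?_, ?_, ?_, ?_⟩
  · -- density
    intro f hf ε hε
    set g : ℕ → Ω → Fin d → ℂ := fun n t => if ‖F t‖ ≤ (n : ℝ) then f t else 0 with hgdef
    have hgm : ∀ n, Measurable (g n) := fun n =>
      Measurable.ite (hSm n) hf.1 measurable_const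
    have hqg : ∀ n t, qf (D t) (g n t) = if ‖F t‖ ≤ (n : ℝ) then qf (D t) (f t) else 0 := by
      intro n t
      by_cases hc : ‖F t‖ ≤ (n : ℝ)
      · rw [show g n t = f t from if_pos hc, if_pos hc]
      · rw [show g n t = 0 from if_neg hc, if_neg hc, qf_zero]
    have hqsub : ∀ n t, qf (D t) (f t - g n t) =
        if ‖F t‖ ≤ (n : ℝ) then 0 else qf (D t) (f t) := by
      intro n t
      by_cases hc : ‖F t‖ ≤ (n : ℝ)
      · rw [show g n t = f t from if_pos hc, sub_self, qf_zero, if_pos hc]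
      · rw [show g n t = 0 from if_neg hc, sub_zero, if_neg hc]
    have htend : Tendsto (fun n => ∫ t, qf (D t) (f t - g n t) ∂μ) atTop (nhds 0) := by
      have h0 : (0 : ℝ) = ∫ (_ : Ω), (0 : ℝ) ∂μ := by simp
      rw [h0]
      refine tendsto_integral_filter_of_dominated_convergence (fun t => qf (D t) (f t))
        (Eventually.of_forall fun n => (hqm (hf.1.sub (hgm n))).aestronglyMeasurable)
        (Eventually.of_forall fun n => ae_of_all _ fun t => ?_) hf.2
        (ae_of_all _ fun t => ?_)
      · rw [Real.norm_eq_abs, abs_of_nonneg (qf_nonneg (hDpos t) _), hqsub]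
        by_cases hc : ‖F t‖ ≤ (n : ℝ)
        · rw [if_pos hc]; exact qf_nonneg (hDpos t) _
        · rw [if_neg hc]
      · obtain ⟨m, hm⟩ := exists_nat_ge ‖F t‖
        refine Tendsto.congr' ?_ tendsto_const_nhds
        filter_upwards [eventually_ge_atTop m] with n hn
        rw [hqsub, if_pos (hm.trans (by exact_mod_cast hn))]
    obtain ⟨n, hn⟩ := (htend.eventually (gt_mem_nhds hε)).exists
    refine ⟨g n, ⟨hgm n, ?_⟩, ⟨meas_smulfun hF (hgm n), ?_⟩, hn⟩
    · refine Integrable.mono' hf.2 (hqm (hgm n)).aestronglyMeasurable (ae_of_all _ fun t => ?_)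
      show ‖qf (D t) (g n t)‖ ≤ qf (D t) (f t)
      rw [Real.norm_eq_abs, abs_of_nonneg (qf_nonneg (hDpos t) _), hqg]
      by_cases hc : ‖F t‖ ≤ (n : ℝ)
      · rw [if_pos hc]
      · rw [if_neg hc]; exact qf_nonneg (hDpos t) _
    · refine Integrable.mono' (hf.2.const_mul ((n : ℝ) ^ 2))
        (hqm (meas_smulfun hF (hgm n))).aestronglyMeasurable (ae_of_all _ fun t => ?_)
      show ‖qf (D t) (F t • g n t)‖ ≤ (n : ℝ) ^ 2 * qf (D t) (f t)
      rw [Real.norm_eq_abs, abs_of_nonneg (qf_nonneg (hDpos t) _), qf_smul, hqg]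
      by_cases hc : ‖F t‖ ≤ (n : ℝ)
      · rw [if_pos hc]
        exact mul_le_mul_of_nonneg_right (pow_le_pow_left₀ (norm_nonneg _) hc 2)
          (qf_nonneg (hDpos t) _)
      · rw [if_neg hc, mul_zero]
        exact mul_nonneg (sq_nonneg _) (qf_nonneg (hDpos t) _)
  · -- closedness
    intro f h G hf hh hG h1 h2
    set w : Ω → Fin d → ℂ := fun t => F t • f t - h t with hwdef
    have hFfm : Measurable fun t => F t • f t := meas_smulfun hF hf.1
    have hwm : Measurable w := hFfm.sub hh.1
    have hint1 : ∀ n, Integrable (fun t => qf (D t) (G n t - f t)) μ := by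
      intro n
      refine Integrable.mono' (((hG n).1.2.const_mul 2).add (hf.2.const_mul 2))
        (hqm ((hG n).1.1.sub hf.1)).aestronglyMeasurable (ae_of_all _ fun t => ?_)
      rw [Real.norm_eq_abs, abs_of_nonneg (qf_nonneg (hDpos t) _)]
      exact qf_sub_le (hDpos t) _ _
    have hint2 : ∀ n, Integrable (fun t => qf (D t) (F t • G n t - h t)) μ := by
      intro n
      refine Integrable.mono' (((hG n).2.2.const_mul 2).add (hh.2.const_mul 2))
        (hqm ((meas_smulfun hF (hG n).1.1).sub hh.1)).aestronglyMeasurable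
        (ae_of_all _ fun t => ?_)
      rw [Real.norm_eq_abs, abs_of_nonneg (qf_nonneg (hDpos t) _)]
      exact qf_sub_le (hDpos t) _ _
    have hwle : ∀ (m : ℕ) t, ‖F t‖ ≤ (m : ℝ) →
        qf (D t) (w t) ≤ 2 * (m : ℝ) ^ 2 * qf (D t) (f t) + 2 * qf (D t) (h t) := by
      intro m t ht
      have h1' := qf_sub_le (hDpos t) (F t • f t) (h t)
      have h2' : qf (D t) (F t • f t) = ‖F t‖ ^ 2 * qf (D t) (f t) := qf_smul _ _ _
      have h3' : ‖F t‖ ^ 2 ≤ (m : ℝ) ^ 2 := pow_le_pow_left₀ (norm_nonneg _) ht 2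
      have h4' := qf_nonneg (hDpos t) (f t)
      nlinarith
    have hwint : ∀ m : ℕ, IntegrableOn (fun t => qf (D t) (w t)) {t | ‖F t‖ ≤ (m : ℝ)} μ := by
      intro m
      refine Integrable.mono' ((hf.2.const_mul (2 * (m : ℝ) ^ 2)).add (hh.2.const_mul 2)).restrict
        (hqm hwm).aestronglyMeasurable.restrict ?_
      rw [ae_restrict_iff' (hSm m)]
      refine ae_of_all _ fun t ht => ?_
      rw [Real.norm_eq_abs, abs_of_nonneg (qf_nonneg (hDpos t) _)]
      exact hwle m t ht
    have hIm0 : ∀ m : ℕ, ∫ t in {t | ‖F t‖ ≤ (m : ℝ)}, qf (D t) (w t) ∂μ = 0 := by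
      intro m
      have hnn : 0 ≤ ∫ t in {t | ‖F t‖ ≤ (m : ℝ)}, qf (D t) (w t) ∂μ :=
        setIntegral_nonneg (hSm m) fun t _ => qf_nonneg (hDpos t) _
      have hub : ∀ n, ∫ t in {t | ‖F t‖ ≤ (m : ℝ)}, qf (D t) (w t) ∂μ ≤
          2 * (m : ℝ) ^ 2 * quadInt μ D (fun t => G n t - f t)
            + 2 * quadInt μ D (fun t => F t • G n t - h t) := by
        intro n
        have hRHSint : Integrable (fun t => 2 * (m : ℝ) ^ 2 * qf (D t) (G n t - f t)
            + 2 * qf (D t) (F t • G n t - h t)) μ :=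
          ((hint1 n).const_mul _).add ((hint2 n).const_mul _)
        have step1 : ∫ t in {t | ‖F t‖ ≤ (m : ℝ)}, qf (D t) (w t) ∂μ ≤
            ∫ t in {t | ‖F t‖ ≤ (m : ℝ)}, (2 * (m : ℝ) ^ 2 * qf (D t) (G n t - f t)
              + 2 * qf (D t) (F t • G n t - h t)) ∂μ := by
          refine setIntegral_mono_on (hwint m) hRHSint.restrict (hSm m) fun t ht => ?_
          have tri := qf_tri (hDpos t) (F t • f t) (F t • G n t) (h t)
          have e1 : F t • f t - F t • G n t = F t • (f t - G n t) := (smul_sub _ _ _).symm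
          have e2 : qf (D t) (F t • (f t - G n t)) = ‖F t‖ ^ 2 * qf (D t) (f t - G n t) :=
            qf_smul _ _ _
          have e3 : qf (D t) (f t - G n t) = qf (D t) (G n t - f t) := by
            rw [← qf_neg (D t) (G n t - f t), neg_sub]
          have h3' : ‖F t‖ ^ 2 ≤ (m : ℝ) ^ 2 := pow_le_pow_left₀ (norm_nonneg _) ht 2
          have h4' := qf_nonneg (hDpos t) (G n t - f t)
          calc qf (D t) (w t)
              ≤ 2 * qf (D t) (F t • f t - F t • G n t) + 2 * qf (D t) (F t • G n t - h t) := tri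
            _ ≤ 2 * (m : ℝ) ^ 2 * qf (D t) (G n t - f t)
                + 2 * qf (D t) (F t • G n t - h t) := by
                rw [e1, e2, e3]; nlinarith
        have step2 : ∫ t in {t | ‖F t‖ ≤ (m : ℝ)}, (2 * (m : ℝ) ^ 2 * qf (D t) (G n t - f t)
              + 2 * qf (D t) (F t • G n t - h t)) ∂μ ≤
            ∫ t, (2 * (m : ℝ) ^ 2 * qf (D t) (G n t - f t)
              + 2 * qf (D t) (F t • G n t - h t)) ∂μ := by
          refine setIntegral_le_integral hRHSint (ae_of_all _ fun t => ?_)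
          have := qf_nonneg (hDpos t) (G n t - f t)
          have := qf_nonneg (hDpos t) (F t • G n t - h t)
          positivity
        have step3 : ∫ t, (2 * (m : ℝ) ^ 2 * qf (D t) (G n t - f t)
              + 2 * qf (D t) (F t • G n t - h t)) ∂μ
            = 2 * (m : ℝ) ^ 2 * quadInt μ D (fun t => G n t - f t)
              + 2 * quadInt μ D (fun t => F t • G n t - h t) := by
          rw [integral_add ((hint1 n).const_mul _) ((hint2 n).const_mul _),
            integral_const_mul, integral_const_mul]
          rfl
        linarith [step1, step2.trans_eq step3]
      have hlim : Tendsto (fun n => 2 * (m : ℝ) ^ 2 * quadInt μ D (fun t => G n t - f t)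
          + 2 * quadInt μ D (fun t => F t • G n t - h t)) atTop (nhds 0) := by
        have := (h1.const_mul (2 * (m : ℝ) ^ 2)).add (h2.const_mul 2)
        simpa using this
      have hle0 := ge_of_tendsto hlim (Eventually.of_forall hub)
      linarith
    have hqw0 : ∀ᵐ t ∂μ, qf (D t) (w t) = 0 := by
      refine key_ae _ fun m => ?_
      have h0 := (integral_eq_zero_iff_of_nonneg
        (fun t => qf_nonneg (hDpos t) _) (hwint m)).mp (hIm0 m)
      have h' := (ae_restrict_iff' (hSm m)).mp h0
      filter_upwards [h'] with t ht hFt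
      simpa using ht hFt
    have hintF : Integrable (fun t => qf (D t) (F t • f t)) μ := by
      refine Integrable.mono' (hh.2.const_mul 2) (hqm hFfm).aestronglyMeasurable ?_
      filter_upwards [hqw0] with t ht
      rw [Real.norm_eq_abs, abs_of_nonneg (qf_nonneg (hDpos t) _)]
      have e : F t • f t = h t + w t := by simp only [hwdef]; abel
      calc qf (D t) (F t • f t) = qf (D t) (h t + w t) := by rw [e]
        _ ≤ 2 * qf (D t) (h t) + 2 * qf (D t) (w t) := qf_add_le (hDpos t) _ _
        _ = 2 * qf (D t) (h t) := by rw [ht]; ring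
    refine ⟨⟨hFfm, hintF⟩, ?_⟩
    show (∫ t, qf (D t) (w t) ∂μ) = 0
    have heq : (fun t => qf (D t) (w t)) =ᵐ[μ] (fun _ => (0 : ℝ)) := hqw0
    rw [integral_congr_ae heq, integral_zero]
  · -- pairing identity
    intro f g hf hFf hg hFg
    unfold pairL2M
    congr 1
    funext t
    simp [Matrix.mulVec_smul, dotProduct_smul, star_smul, smul_dotProduct,
      smul_eq_mul, Complex.star_def, Complex.conj_conj]
  · -- adjoint inclusion
    intro g h hg hh hyp
    set w : Ω → Fin d → ℂ := fun t => (starRingEnd ℂ) (F t) • g t - h t with hwdef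
    have hconjF : Measurable fun t => (starRingEnd ℂ) (F t) :=
      continuous_star.measurable.comp hF
    have hconjm : Measurable fun t => (starRingEnd ℂ) (F t) • g t := meas_smulfun hconjF hg.1
    have hwm : Measurable w := hconjm.sub hh.1
    have hqw0 : ∀ᵐ t ∂μ, qf (D t) (w t) = 0 := by
      refine key_ae _ fun m => ?_
      set f : Ω → Fin d → ℂ := fun t => if ‖F t‖ ≤ (m : ℝ) then w t else 0 with hfdef
      have hfm : Measurable f := Measurable.ite (hSm m) hwm measurable_const
      have hwb : ∀ t, ‖F t‖ ≤ (m : ℝ) →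
          qf (D t) (w t) ≤ 2 * (m : ℝ) ^ 2 * qf (D t) (g t) + 2 * qf (D t) (h t) := by
        intro t ht
        have h1' := qf_sub_le (hDpos t) ((starRingEnd ℂ) (F t) • g t) (h t)
        have h2' : qf (D t) ((starRingEnd ℂ) (F t) • g t)
            = ‖(starRingEnd ℂ) (F t)‖ ^ 2 * qf (D t) (g t) := qf_smul _ _ _
        rw [RCLike.norm_conj] at h2'
        have h3' : ‖F t‖ ^ 2 ≤ (m : ℝ) ^ 2 := pow_le_pow_left₀ (norm_nonneg _) ht 2
        have h4' := qf_nonneg (hDpos t) (g t)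
        nlinarith
      have hqf_eq : ∀ t, qf (D t) (f t)
          = if ‖F t‖ ≤ (m : ℝ) then qf (D t) (w t) else 0 := by
        intro t
        by_cases hc : ‖F t‖ ≤ (m : ℝ)
        · rw [show f t = w t from if_pos hc, if_pos hc]
        · rw [show f t = 0 from if_neg hc, if_neg hc, qf_zero]
      have hfint : Integrable (fun t => qf (D t) (f t)) μ := by
        refine Integrable.mono' ((hg.2.const_mul (2 * (m : ℝ) ^ 2)).add (hh.2.const_mul 2))
          (hqm hfm).aestronglyMeasurable (ae_of_all _ fun t => ?_)
        rw [Real.norm_eq_abs, abs_of_nonneg (qf_nonneg (hDpos t) _), hqf_eq]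
        by_cases hc : ‖F t‖ ≤ (m : ℝ)
        · rw [if_pos hc]; exact hwb t hc
        · rw [if_neg hc]
          have hg' := qf_nonneg (hDpos t) (g t)
          have hh' := qf_nonneg (hDpos t) (h t)
          have hm2 : (0:ℝ) ≤ 2 * (m : ℝ) ^ 2 := by positivity
          exact add_nonneg (mul_nonneg hm2 hg')
            (by show (0:ℝ) ≤ 2 * qf (D t) (h t); linarith)
      have hfmem : MemL2M μ D f := ⟨hfm, hfint⟩
      have hFfint : Integrable (fun t => qf (D t) (F t • f t)) μ := by
        refine Integrable.mono' (hfint.const_mul ((m : ℝ) ^ 2))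
          (hqm (meas_smulfun hF hfm)).aestronglyMeasurable (ae_of_all _ fun t => ?_)
        rw [Real.norm_eq_abs, abs_of_nonneg (qf_nonneg (hDpos t) _), qf_smul]
        by_cases hc : ‖F t‖ ≤ (m : ℝ)
        · exact mul_le_mul_of_nonneg_right (pow_le_pow_left₀ (norm_nonneg _) hc 2)
            (qf_nonneg (hDpos t) _)
        · have hz : f t = 0 := if_neg hc
          rw [hz, qf_zero, mul_zero, mul_zero]
      have hFfmem : MemL2M μ D (fun t => F t • f t) := ⟨meas_smulfun hF hfm, hFfint⟩
      have heq := hyp f hfmem hFfmem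
      have hA1int : Integrable (fun t => star (g t) ⬝ᵥ (D t *ᵥ (F t • f t))) μ := by
        refine Integrable.mono' (hg.2.add hFfint)
          (meas_sesq hDmeas hg.1 (meas_smulfun hF hfm)).aestronglyMeasurable
          (ae_of_all _ fun t => ?_)
        exact cs' (hDpos t) _ _
      have hA2int : Integrable (fun t => star (h t) ⬝ᵥ (D t *ᵥ f t)) μ := by
        refine Integrable.mono' (hh.2.add hfint)
          (meas_sesq hDmeas hh.1 hfm).aestronglyMeasurable (ae_of_all _ fun t => ?_)
        exact cs' (hDpos t) _ _
      have hsub0 : ∫ t, (star (g t) ⬝ᵥ (D t *ᵥ (F t • f t))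
          - star (h t) ⬝ᵥ (D t *ᵥ f t)) ∂μ = 0 := by
        rw [integral_sub hA1int hA2int, sub_eq_zero]
        exact heq
      have hptw : ∀ t, star (g t) ⬝ᵥ (D t *ᵥ (F t • f t)) - star (h t) ⬝ᵥ (D t *ᵥ f t)
          = ((qf (D t) (f t) : ℝ) : ℂ) := by
        intro t
        have e1 : star (g t) ⬝ᵥ (D t *ᵥ (F t • f t))
            = star ((starRingEnd ℂ) (F t) • g t) ⬝ᵥ (D t *ᵥ f t) := by
          simp [Matrix.mulVec_smul, dotProduct_smul, star_smul, smul_dotProduct,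
            smul_eq_mul, Complex.star_def, Complex.conj_conj]
        rw [e1]
        have e2 : star ((starRingEnd ℂ) (F t) • g t) ⬝ᵥ (D t *ᵥ f t)
            - star (h t) ⬝ᵥ (D t *ᵥ f t) = star (w t) ⬝ᵥ (D t *ᵥ f t) := by
          simp only [hwdef, star_sub, sub_dotProduct]
        rw [e2]
        by_cases hc : ‖F t‖ ≤ (m : ℝ)
        · have hft : f t = w t := if_pos hc
          rw [hft, sesq_re (hDpos t) (w t)]
        · have hft : f t = 0 := if_neg hc
          rw [hft]
          simp [qf_zero]
      have hi0 : ∫ t, qf (D t) (f t) ∂μ = 0 := by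
        have : ∫ t, ((qf (D t) (f t) : ℝ) : ℂ) ∂μ = 0 := by
          rw [← hsub0]
          exact integral_congr_ae (ae_of_all _ fun t => (hptw t).symm)
        have hci : Integrable (fun t => ((qf (D t) (f t) : ℝ) : ℂ)) μ := hfint.ofReal
        have h2 := integral_re hci
        rw [this] at h2
        simpa using h2
      have hae := (integral_eq_zero_iff_of_nonneg
        (fun t => qf_nonneg (hDpos t) _) hfint).mp hi0
      filter_upwards [hae] with t ht hFt
      have := hqf_eq t
      rw [if_pos hFt] at this
      rw [← this]
      simpa using ht
    have hcint : Integrable (fun t => qf (D t) ((starRingEnd ℂ) (F t) • g t)) μ := by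
      refine Integrable.mono' (hh.2.const_mul 2) (hqm hconjm).aestronglyMeasurable ?_
      filter_upwards [hqw0] with t ht
      rw [Real.norm_eq_abs, abs_of_nonneg (qf_nonneg (hDpos t) _)]
      have e : (starRingEnd ℂ) (F t) • g t = h t + w t := by simp only [hwdef]; abel
      calc qf (D t) ((starRingEnd ℂ) (F t) • g t) = qf (D t) (h t + w t) := by rw [e]
        _ ≤ 2 * qf (D t) (h t) + 2 * qf (D t) (w t) := qf_add_le (hDpos t) _ _
        _ = 2 * qf (D t) (h t) := by rw [ht]; ring
    refine ⟨⟨hconjm, hcint⟩, ?_⟩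
    show (∫ t, qf (D t) (w t) ∂μ) = 0
    have heq : (fun t => qf (D t) (w t)) =ᵐ[μ] (fun _ => (0 : ℝ)) := hqw0
    rw [integral_congr_ae heq, integral_zero]
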